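/- Let 0 < β < γ ≤ 1, θ > 0, A > 0, δ = γ/β > 1, and Φ(t,s) = exp( -θA(1-s)^{γ-β}(1 - B(t,s)^{-(δ-1)})/(δ-1) ) with B(t,s) = 1 + t(1-s)^β/A. With normalization z = z(t) = (A/t)^{1/β}, for every λ > 0, lim_{t→∞} Φ(t, e^{-λz}) = 1. -/

import Mathlib

open Real Filter

theorem degenerate_limit_beta_lt_gamma_beta_norm
    (β γ θ A δ : ℝ) (hβ : 0 < β) (hβγ : β < γ) (hγ1 : γ ≤ 1)
    (hθ : 0 < θ) (hA : 0 < A) (hδ : δ = γ / β)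
    (B Φ : ℝ → ℝ → ℝ)
    (hB : ∀ t s, B t s = 1 + t * (1 - s) ^ β / A)
    (hΦ : ∀ t s, Φ t s = Real.exp (-(θ * A) * (1 - s) ^ (γ - β) * ((1 - B t s ^ (-(δ - 1))) / (δ - 1)))) :
    ∀ lam : ℝ, 0 < lam →
      Tendsto (fun t : ℝ => Φ t (Real.exp (-lam * (A / t) ^ (1 / β))))
        atTop (nhds 1) := by
  intro lam hlam
  have hδ1 : 1 < δ := by rw [hδ]; exact (one_lt_div hβ).mpr hβγ
  have hγβ : 0 < γ - β := by linarith
  -- u t = (A/t)^(1/β) → 0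
  have hu : Tendsto (fun t : ℝ => (A / t) ^ (1 / β)) atTop (nhds 0) := by
    have h1 : Tendsto (fun t : ℝ => A / t) atTop (nhds 0) := by
      simpa [div_eq_mul_inv] using tendsto_inv_atTop_zero.const_mul A
    have h2 : ContinuousAt (fun x : ℝ => x ^ (1 / β)) 0 :=
      Real.continuousAt_rpow_const 0 (1 / β) (Or.inr (by positivity))
    have := h2.tendsto.comp h1
    simpa [Function.comp_def, Real.zero_rpow (by positivity : (0:ℝ) < β⁻¹).ne'] using this
  -- e t = 1 - exp(-lam * u t) → 0
  have he : Tendsto (fun t : ℝ => 1 - Real.exp (-lam * (A / t) ^ (1 / β))) atTop (nhds 0) := by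
    have : Tendsto (fun t : ℝ => Real.exp (-lam * (A / t) ^ (1 / β))) atTop (nhds 1) := by
      have hm : Tendsto (fun t : ℝ => -lam * (A / t) ^ (1 / β)) atTop (nhds 0) := by
        simpa using hu.const_mul (-lam)
      have := (Real.continuous_exp.tendsto 0).comp hm
      simpa [Function.comp_def] using this
    have := (tendsto_const_nhds (x := (1 : ℝ))).sub this
    simpa using this
  -- f t = (e t)^(γ-β) → 0
  have hf : Tendsto (fun t : ℝ =>
      (1 - Real.exp (-lam * (A / t) ^ (1 / β))) ^ (γ - β)) atTop (nhds 0) := by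
    have h2 : ContinuousAt (fun x : ℝ => x ^ (γ - β)) 0 :=
      Real.continuousAt_rpow_const 0 (γ - β) (Or.inr hγβ.le)
    have := h2.tendsto.comp he
    simpa [Function.comp_def, Real.zero_rpow (ne_of_gt hγβ)] using this
  -- the exponent tends to 0
  set E : ℝ → ℝ := fun t =>
    -(θ * A) * (1 - Real.exp (-lam * (A / t) ^ (1 / β))) ^ (γ - β) *
      ((1 - B t (Real.exp (-lam * (A / t) ^ (1 / β))) ^ (-(δ - 1))) / (δ - 1)) with hE
  have hEtendsto : Tendsto E atTop (nhds 0) := by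
    apply squeeze_zero_norm' (a := fun t =>
      (θ * A / (δ - 1)) * (1 - Real.exp (-lam * (A / t) ^ (1 / β))) ^ (γ - β))
    · filter_upwards [eventually_gt_atTop (0 : ℝ)] with t ht
      set s := Real.exp (-lam * (A / t) ^ (1 / β)) with hs
      have hu0 : 0 < (A / t) ^ (1 / β) := Real.rpow_pos_of_pos (by positivity) _
      have hs1 : s < 1 := by
        rw [hs]
        have : -lam * (A / t) ^ (1 / β) < 0 := by nlinarith
        calc Real.exp (-lam * (A / t) ^ (1 / β)) < Real.exp 0 := Real.exp_lt_exp.mpr this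
          _ = 1 := Real.exp_zero
      have he0 : 0 < 1 - s := by linarith
      have hB1 : 1 ≤ B t s := by
        rw [hB]
        have : 0 ≤ t * (1 - s) ^ β / A := by
          have := Real.rpow_nonneg he0.le β
          positivity
        linarith
      have hBr : 0 < B t s ^ (-(δ - 1)) := Real.rpow_pos_of_pos (by linarith) _
      have hBr1 : B t s ^ (-(δ - 1)) ≤ 1 :=
        Real.rpow_le_one_of_one_le_of_nonpos hB1 (by linarith)
      have hg0 : 0 ≤ (1 - B t s ^ (-(δ - 1))) / (δ - 1) := by
        apply div_nonneg (by linarith) (by linarith)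
      have hg1 : (1 - B t s ^ (-(δ - 1))) / (δ - 1) ≤ 1 / (δ - 1) := by
        apply div_le_div_of_nonneg_right ?_ (by linarith) |>.trans_eq rfl
        · linarith
      have hfnn : 0 ≤ (1 - s) ^ (γ - β) := Real.rpow_nonneg he0.le _
      rw [hE]
      simp only [← hs]
      rw [Real.norm_eq_abs, abs_mul, abs_mul, abs_neg, abs_of_pos (by positivity : (0:ℝ) < θ * A),
        abs_of_nonneg hfnn, abs_of_nonneg hg0]
      calc θ * A * (1 - s) ^ (γ - β) * ((1 - B t s ^ (-(δ - 1))) / (δ - 1))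
          ≤ θ * A * (1 - s) ^ (γ - β) * (1 / (δ - 1)) := by
            apply mul_le_mul_of_nonneg_left hg1 (by positivity)
        _ = θ * A / (δ - 1) * (1 - s) ^ (γ - β) := by ring
    · have := hf.const_mul (θ * A / (δ - 1))
      simpa using this
  have : Tendsto (fun t => Real.exp (E t)) atTop (nhds 1) := by
    have := (Real.continuous_exp.tendsto 0).comp hEtendsto
    simpa [Function.comp_def] using this
  refine this.congr fun t => ?_
  rw [hΦ]
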